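/- Let d be a positive integer and ε ∈ (0, 1/2). Define f(x) = x·((1−x)^d − (εx/(1−ε))^d) for x ∈ [0,1]. Then: (i) every maximizer x* of f on [0,1] satisfies x* ≤ 1/(d+1); and (ii) for every such maximizer x*, the welfare improvements W_CB = ε − ε^{d+1} and W_DCB = ε − ε·(1 − x*)^{d+1} − (1−ε)·(εx*/(1−ε))^{d+1} satisfy W_DCB > 0 and W_CB · (1 − (d/(d+1))^{d+1}) ≥ (1 − ε^d) · W_DCB; in particular W_CB / W_DCB ≥ (1 − ε^d) / (1 − (d/(d+1))^{d+1}). -/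

import Mathlib

lemma amgm18 (d : ℕ) (hd : 0 < d) (x : ℝ) (hx0 : 0 ≤ x) (hx1 : x ≤ 1) :
    x * (1 - x) ^ d ≤ (1 / ((d : ℝ) + 1)) * ((d : ℝ) / ((d : ℝ) + 1)) ^ d := by
  set D : ℝ := (d : ℝ) with hD
  have hDpos : (0 : ℝ) < D := Nat.cast_pos.mpr hd
  have hD1 : (0 : ℝ) < D + 1 := by linarith
  set p₁ : ℝ := (D + 1) * x with hp1
  set p₂ : ℝ := (D + 1) * (1 - x) / D with hp2
  have hp₁ : 0 ≤ p₁ := by positivity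
  have hp₂ : 0 ≤ p₂ := by
    have : 0 ≤ 1 - x := by linarith
    positivity
  have hw : (1 / (D + 1)) + (D / (D + 1)) = 1 := by field_simp; ring
  have key := Real.geom_mean_le_arith_mean2_weighted
    (by positivity : (0:ℝ) ≤ 1 / (D + 1)) (by positivity : (0:ℝ) ≤ D / (D + 1)) hp₁ hp₂ hw
  have hrhs : (1 / (D + 1)) * p₁ + (D / (D + 1)) * p₂ = 1 := by
    field_simp [hp1, hp2]; rw [hp1, hp2]; field_simp; ring
  rw [hrhs] at key
  have key2 : (p₁ ^ (1 / (D + 1)) * p₂ ^ (D / (D + 1))) ^ ((D + 1) : ℝ) ≤ 1 :=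
    Real.rpow_le_one (by positivity) key (by positivity)
  rw [Real.mul_rpow (by positivity) (by positivity),
    ← Real.rpow_mul hp₁, ← Real.rpow_mul hp₂,
    one_div_mul_cancel (ne_of_gt hD1), div_mul_cancel₀ _ (ne_of_gt hD1),
    Real.rpow_one, Real.rpow_natCast] at key2
  have heq : x * (1 - x) ^ d = (1 / (D + 1) * (D / (D + 1)) ^ d) * (p₁ * p₂ ^ d) := by
    rw [hp1, hp2, div_pow, div_pow, mul_pow]
    field_simp
  rw [heq]
  calc (1 / (D + 1) * (D / (D + 1)) ^ d) * (p₁ * p₂ ^ d)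
      ≤ (1 / (D + 1) * (D / (D + 1)) ^ d) * 1 := by
        apply mul_le_mul_of_nonneg_left key2 (by positivity)
    _ = 1 / (D + 1) * (D / (D + 1)) ^ d := mul_one _

/-- Lower bound construction for monomial prices of degree `d`: with demand 1
on `[0,ε]` and 0 on `(ε,1]`, price `P(z) = (d+1)z^d` and revenue proportional
to `f(x) = x·((1−x)^d − (εx/(1−ε))^d)`: (i) every maximizer `x*` of `f` on
`[0,1]` satisfies `x* ≤ 1/(d+1)`; (ii) the welfare improvements
`W_CB = ε − ε^{d+1}` and `W_DCB = ε − ε(1−x*)^{d+1} − (1−ε)(εx*/(1−ε))^{d+1}`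
satisfy `W_DCB > 0` and `W_CB·(1 − (d/(d+1))^{d+1}) ≥ (1 − ε^d)·W_DCB`, hence
`W_CB/W_DCB ≥ (1 − ε^d)/(1 − (d/(d+1))^{d+1})`. -/
theorem stmt18 (d : ℕ) (hd : 0 < d)
    (ε : ℝ) (hε : ε ∈ Set.Ioo (0 : ℝ) (1 / 2))
    (f : ℝ → ℝ)
    (hf : ∀ x, f x = x * ((1 - x) ^ d - (ε * x / (1 - ε)) ^ d))
    (xstar : ℝ) (hxs : xstar ∈ Set.Icc (0 : ℝ) 1)
    (hmax : ∀ x ∈ Set.Icc (0 : ℝ) 1, f x ≤ f xstar) :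
    xstar ≤ 1 / ((d : ℝ) + 1) ∧
    0 < ε - ε * (1 - xstar) ^ (d + 1) - (1 - ε) * (ε * xstar / (1 - ε)) ^ (d + 1) ∧
    (ε - ε ^ (d + 1)) * (1 - ((d : ℝ) / ((d : ℝ) + 1)) ^ (d + 1)) ≥
      (1 - ε ^ d) *
        (ε - ε * (1 - xstar) ^ (d + 1) - (1 - ε) * (ε * xstar / (1 - ε)) ^ (d + 1)) ∧
    (ε - ε ^ (d + 1)) /
        (ε - ε * (1 - xstar) ^ (d + 1) - (1 - ε) * (ε * xstar / (1 - ε)) ^ (d + 1)) ≥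
      (1 - ε ^ d) / (1 - ((d : ℝ) / ((d : ℝ) + 1)) ^ (d + 1)) := by
  obtain ⟨hε0, hεh⟩ := hε
  have h1ε : (0:ℝ) < 1 - ε := by linarith
  have hεlt : ε < 1 - ε := by linarith
  set D : ℝ := (d : ℝ) with hD
  have hDpos : (0 : ℝ) < D := Nat.cast_pos.mpr hd
  have hD1 : (0 : ℝ) ≤ 1 := by norm_num
  have hD1' : (0 : ℝ) < D + 1 := by linarith
  have hDge1 : (1:ℝ) ≤ D := by exact_mod_cast Nat.one_le_cast.mpr hd
  set x0 : ℝ := 1 / (D + 1) with hx0def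
  have hx0pos : 0 < x0 := by positivity
  have hx0le1 : x0 ≤ 1 := by
    rw [hx0def, div_le_one hD1']; linarith
  have hx0mem : x0 ∈ Set.Icc (0:ℝ) 1 := ⟨le_of_lt hx0pos, hx0le1⟩
  have h1x0 : 1 - x0 = D / (D + 1) := by
    rw [hx0def]; field_simp; ring
  set c : ℝ := ε / (1 - ε) with hcdef
  have hc0 : 0 < c := by positivity
  have hc1 : c < 1 := (div_lt_one h1ε).mpr hεlt
  have hfx : ∀ x, f x = x * (1 - x) ^ d - c ^ d * x ^ (d + 1) := by
    intro x
    rw [hf]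
    have h : ε * x / (1 - ε) = c * x := by rw [hcdef]; ring
    rw [h, mul_pow, pow_succ]; ring
  -- (i)
  have hxle : xstar ≤ x0 := by
    by_contra h
    push_neg at h
    have hg : xstar * (1 - xstar) ^ d ≤ x0 * (1 - x0) ^ d := by
      have := amgm18 d hd xstar hxs.1 hxs.2
      rw [← hx0def, ← h1x0] at this
      exact this
    have hpow : x0 ^ (d + 1) < xstar ^ (d + 1) :=
      pow_lt_pow_left₀ h (le_of_lt hx0pos) (by omega)
    have hlt : f xstar < f x0 := by
      rw [hfx, hfx]
      nlinarith [mul_pos (pow_pos hc0 d) (sub_pos.mpr hpow)]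
    linarith [hmax x0 hx0mem]
  -- f x0 > 0
  have hcx0 : c * x0 < 1 - x0 := by
    rw [h1x0, hx0def]
    have : c * (1 / (D + 1)) < 1 / (D + 1) := by
      nlinarith
    calc c * (1 / (D + 1)) < 1 / (D + 1) := this
      _ ≤ D / (D + 1) := (div_le_div_iff_of_pos_right hD1').mpr hDge1
  have hfx0pos : 0 < f x0 := by
    rw [hfx]
    have hcx0n : 0 ≤ c * x0 := by positivity
    have hpowlt : (c * x0) ^ d < (1 - x0) ^ d :=
      pow_lt_pow_left₀ hcx0 hcx0n (by omega)
    have hid : c ^ d * x0 ^ (d + 1) = (c * x0) ^ d * x0 := by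
      rw [mul_pow, pow_succ]; ring
    rw [hid]
    nlinarith [mul_pos hx0pos (sub_pos.mpr hpowlt)]
  have hxpos : 0 < xstar := by
    rcases hxs.1.lt_or_eq with h | h
    · exact h
    · exfalso
      have h0 : f xstar = 0 := by rw [← h, hf]; ring
      linarith [hmax x0 hx0mem]
  set y : ℝ := ε * xstar / (1 - ε) with hydef
  have hyc : y = c * xstar := by rw [hydef, hcdef]; ring
  have hy0 : 0 < y := by rw [hyc]; positivity
  have hy1 : y < 1 := by
    rw [hyc]
    calc c * xstar ≤ c * 1 := by nlinarith [hxs.2]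
      _ < 1 := by linarith
  have hypow : y ^ d < 1 := pow_lt_one₀ hy0.le hy1 (by omega)
  have h1 : (1 - ε) * y ^ (d + 1) = (ε * xstar) * y ^ d := by
    rw [pow_succ, hydef]
    field_simp
  have h2 : (1 - xstar) ^ (d + 1) ≤ 1 - xstar := by
    apply pow_le_of_le_one (by linarith [hxs.2]) (by linarith [hxs.1]) (by omega)
  have hWpos : 0 < ε - ε * (1 - xstar) ^ (d + 1) - (1 - ε) * y ^ (d + 1) := by
    rw [h1]
    nlinarith [mul_pos (mul_pos hε0 hxpos) (sub_pos.mpr hypow),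
      mul_le_mul_of_nonneg_left h2 hε0.le]
  set K : ℝ := (D / (D + 1)) ^ (d + 1) with hKdef
  have hK1 : K < 1 := by
    apply pow_lt_one₀ (by positivity) ((div_lt_one hD1').mpr (by linarith)) (by omega)
  have h3 : K ≤ (1 - xstar) ^ (d + 1) := by
    apply pow_le_pow_left₀ (by positivity)
    rw [← h1x0]; linarith
  have h4 : 0 ≤ (1 - ε) * y ^ (d + 1) := by positivity
  have hεd : ε ^ d < 1 := pow_lt_one₀ hε0.le (by linarith) (by omega)
  have hWle : ε - ε * (1 - xstar) ^ (d + 1) - (1 - ε) * y ^ (d + 1) ≤ ε * (1 - K) := by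
    have hmul := mul_le_mul_of_nonneg_left h3 hε0.le
    have hre : ε * (1 - K) = ε - ε * K := by ring
    linarith [h4]
  have hthird : (ε - ε ^ (d + 1)) * (1 - K) ≥
      (1 - ε ^ d) * (ε - ε * (1 - xstar) ^ (d + 1) - (1 - ε) * y ^ (d + 1)) := by
    calc (1 - ε ^ d) * (ε - ε * (1 - xstar) ^ (d + 1) - (1 - ε) * y ^ (d + 1))
        ≤ (1 - ε ^ d) * (ε * (1 - K)) := mul_le_mul_of_nonneg_left hWle (by linarith)
      _ = (ε - ε ^ (d + 1)) * (1 - K) := by rw [pow_succ]; ring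
  refine ⟨hxle, hWpos, hthird, ?_⟩
  rw [ge_iff_le, div_le_div_iff₀ (by linarith) hWpos]
  linarith [hthird]
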